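/- Let n ≥ 2, let Ω ⊆ ℝⁿ be a bounded measurable set, and let q : ℝⁿ → ℂ be integrable on Ω (with respect to Lebesgue measure). Suppose that for all vectors η, ξ ∈ ℝⁿ with η·ξ = 0 and |η| = |ξ| (Euclidean inner product and norm) one has ∫_Ω q(x) · exp((η + iξ)·x) · exp((−η + iξ)·x) dx = 0, where for a complex vector ρ = a + ib ∈ ℂⁿ we write exp(ρ·x) = exp((a·x) + i(b·x)). Then q = 0 almost everywhere in Ω. -/

import Mathlib

open MeasureTheory RealInnerProductSpace FourierTransform
open scoped ContDiff

section Aux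

variable {E : Type*} [NormedAddCommGroup E] [InnerProductSpace ℝ E]

/-- A smooth compactly supported function is a Schwartz function. -/
noncomputable def schwartzOfCompactSupport {F : Type*} [NormedAddCommGroup F]
    [NormedSpace ℝ F] (φ : E → F) (h1 : ContDiff ℝ ∞ φ) (h2 : HasCompactSupport φ) :
    SchwartzMap E F where
  toFun := φ
  smooth' := h1
  decay' := by
    intro k m
    have hc : Continuous fun x => ‖x‖ ^ k * ‖iteratedFDeriv ℝ m φ x‖ :=
      (continuous_norm.pow k).mul (h1.continuous_iteratedFDeriv (by exact_mod_cast le_top)).norm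
    have hs : HasCompactSupport fun x => ‖x‖ ^ k * ‖iteratedFDeriv ℝ m φ x‖ := by
      apply HasCompactSupport.mul_left
      exact (h2.iteratedFDeriv m).norm
    obtain ⟨C, hC⟩ := hc.bounded_above_of_compact_support hs
    exact ⟨C, fun x => (Real.le_norm_self _).trans (hC x)⟩

/-- In dimension ≥ 2 every vector has an orthogonal companion of the same norm. -/
theorem exists_orthogonal_same_norm [FiniteDimensional ℝ E]
    (hn : 2 ≤ Module.finrank ℝ E) (ξ : E) : ∃ η : E, ⟪η, ξ⟫ = 0 ∧ ‖η‖ = ‖ξ‖ := by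
  rcases eq_or_ne ξ 0 with rfl | hξ
  · exact ⟨0, by simp, by simp⟩
  · have hfin : 0 < Module.finrank ℝ (ℝ ∙ ξ)ᗮ := by
      have h1 : Module.finrank ℝ (ℝ ∙ ξ) + Module.finrank ℝ (ℝ ∙ ξ)ᗮ =
          Module.finrank ℝ E := Submodule.finrank_add_finrank_orthogonal _
      have h2 : Module.finrank ℝ (ℝ ∙ ξ) = 1 := finrank_span_singleton hξ
      omega
    have hne : (ℝ ∙ ξ)ᗮ ≠ ⊥ := by
      intro hbot
      rw [hbot] at hfin
      simp at hfin
    obtain ⟨v, hv⟩ := Submodule.exists_mem_ne_zero_of_ne_bot hne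
    have hv0 : v ≠ 0 := hv.2
    refine ⟨(‖ξ‖ / ‖v‖) • v, ?_, ?_⟩
    · have : ⟪v, ξ⟫ = 0 := by
        have := (Submodule.mem_orthogonal _ v).1 hv.1 ξ (Submodule.mem_span_singleton_self ξ)
        rw [← real_inner_comm]; exact this
      rw [real_inner_smul_left, this, mul_zero]
    · rw [norm_smul, Real.norm_eq_abs, abs_div, abs_norm, abs_norm,
        div_mul_cancel₀ _ (norm_ne_zero_iff.2 hv0)]

end Aux

set_option maxHeartbeats 1000000 in
/-- Calderón's density argument: if `q` is integrable on a bounded measurable set `Ω ⊆ ℝⁿ`,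
`n ≥ 2`, and the integral of `q` against the product of the two exponential harmonic functions
`e^{(η+iξ)·x}` and `e^{(-η+iξ)·x}` vanishes for all `η ⊥ ξ` with `|η| = |ξ|`,
then `q = 0` a.e. in `Ω`. -/
theorem stmt_3 {n : ℕ} (hn : 2 ≤ n) (Ω : Set (EuclideanSpace ℝ (Fin n)))
    (hΩ_meas : MeasurableSet Ω) (hΩ_bdd : Bornology.IsBounded Ω)
    (q : EuclideanSpace ℝ (Fin n) → ℂ)
    (hq : IntegrableOn q Ω volume)
    (h : ∀ η ξ : EuclideanSpace ℝ (Fin n), ⟪η, ξ⟫ = 0 → ‖η‖ = ‖ξ‖ →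
      ∫ x in Ω, q x * Complex.exp ((⟪η, x⟫ : ℂ) + Complex.I * (⟪ξ, x⟫ : ℂ)) *
        Complex.exp ((⟪-η, x⟫ : ℂ) + Complex.I * (⟪ξ, x⟫ : ℂ)) = 0) :
    q =ᵐ[volume.restrict Ω] 0 := by
  classical
  -- Step 1: the combined exponential identity.
  have key : ∀ ξ : EuclideanSpace ℝ (Fin n), ∫ x in Ω, q x * Complex.exp (2 * Complex.I * (⟪ξ, x⟫ : ℝ)) = 0 := by
    intro ξ
    have hdim : 2 ≤ Module.finrank ℝ (EuclideanSpace ℝ (Fin n)) := by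
      simpa [finrank_euclideanSpace] using hn
    obtain ⟨η, hηξ, hηn⟩ := exists_orthogonal_same_norm hdim ξ
    have h0 := h η ξ hηξ hηn
    have heq : (∫ x in Ω, q x * Complex.exp (2 * Complex.I * (⟪ξ, x⟫ : ℝ))) =
        ∫ x in Ω, q x * Complex.exp ((⟪η, x⟫ : ℂ) + Complex.I * (⟪ξ, x⟫ : ℂ)) *
          Complex.exp ((⟪-η, x⟫ : ℂ) + Complex.I * (⟪ξ, x⟫ : ℂ)) := by
      apply setIntegral_congr_fun hΩ_meas
      intro x _
      dsimp only
      have hsum : ((⟪η, x⟫ : ℂ) + Complex.I * (⟪ξ, x⟫ : ℂ)) +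
          ((⟪-η, x⟫ : ℂ) + Complex.I * (⟪ξ, x⟫ : ℂ)) = 2 * Complex.I * (⟪ξ, x⟫ : ℝ) := by
        have hneg : ⟪-η, x⟫ = -⟪η, x⟫ := by rw [inner_neg_left]
        rw [hneg]
        push_cast
        ring
      rw [mul_assoc (q x), ← Complex.exp_add, hsum]
    rw [heq]
    exact h0
  -- Step 2: the Fourier transform of the zero-extension vanishes.
  set g : EuclideanSpace ℝ (Fin n) → ℂ := Ω.indicator q with hg_def
  have hg_int : Integrable g volume := (integrable_indicator_iff hΩ_meas).2 hq
  have hFg : ∀ w : EuclideanSpace ℝ (Fin n), 𝓕 g w = 0 := by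
    intro w
    rw [Real.fourier_eq']
    have : ∫ v, Complex.exp (↑(-2 * Real.pi * ⟪v, w⟫) * Complex.I) • g v =
        ∫ v in Ω, q v * Complex.exp (2 * Complex.I * (⟪(-Real.pi) • w, v⟫ : ℝ)) := by
      rw [← integral_indicator hΩ_meas]
      congr 1
      ext v
      rw [hg_def]
      by_cases hv : v ∈ Ω
      · rw [Set.indicator_of_mem hv, Set.indicator_of_mem hv, smul_eq_mul, mul_comm]
        congr 2
        have h1 : ⟪(-Real.pi) • w, v⟫ = -Real.pi * ⟪w, v⟫ := real_inner_smul_left _ _ _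
        have h2 : ⟪v, w⟫ = ⟪w, v⟫ := real_inner_comm _ _
        rw [h1, h2]
        push_cast
        ring
      · rw [Set.indicator_of_notMem hv, Set.indicator_of_notMem hv, smul_zero]
    rw [this, key]
  -- Step 3: test against smooth compactly supported functions.
  have hg_zero : ∀ᵐ x ∂(volume : Measure (EuclideanSpace ℝ (Fin n))), g x = 0 := by
    apply ae_eq_zero_of_integral_contDiff_smul_eq_zero hg_int.locallyIntegrable
    intro φ hφ_smooth hφ_supp
    -- turn φ into a complex-valued Schwartz function
    have hφC_smooth : ContDiff ℝ ∞ (fun x => (φ x : ℂ)) :=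
      Complex.ofRealCLM.contDiff.comp hφ_smooth
    have hφC_supp : HasCompactSupport (fun x => (φ x : ℂ)) :=
      hφ_supp.comp_left (g := fun r : ℝ => (r : ℂ)) (by simp)
    set Φ : SchwartzMap (EuclideanSpace ℝ (Fin n)) ℂ := schwartzOfCompactSupport _ hφC_smooth hφC_supp with hΦ_def
    set ψ : SchwartzMap (EuclideanSpace ℝ (Fin n)) ℂ := (SchwartzMap.fourierTransformCLE ℂ (SchwartzMap (EuclideanSpace ℝ (Fin n)) ℂ)).symm Φ with hψ_def
    have hψΦ : 𝓕 (ψ : EuclideanSpace ℝ (Fin n) → ℂ) = (Φ : EuclideanSpace ℝ (Fin n) → ℂ) := by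
      have : (SchwartzMap.fourierTransformCLE ℂ (SchwartzMap (EuclideanSpace ℝ (Fin n)) ℂ)) ψ = Φ :=
        (SchwartzMap.fourierTransformCLE ℂ (SchwartzMap (EuclideanSpace ℝ (Fin n)) ℂ)).apply_symm_apply Φ
      calc 𝓕 (ψ : EuclideanSpace ℝ (Fin n) → ℂ) = ((SchwartzMap.fourierTransformCLE ℂ (SchwartzMap (EuclideanSpace ℝ (Fin n)) ℂ)) ψ : EuclideanSpace ℝ (Fin n) → ℂ) := rfl
      _ = (Φ : EuclideanSpace ℝ (Fin n) → ℂ) := by rw [this]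
    have flip_eq : (innerₗ (EuclideanSpace ℝ (Fin n))).flip = innerₗ (EuclideanSpace ℝ (Fin n)) := by
      apply LinearMap.ext; intro x; apply LinearMap.ext; intro y
      simp [real_inner_comm]
    have mult : ∫ ξ, (𝓕 (ψ : EuclideanSpace ℝ (Fin n) → ℂ) ξ) • (g ξ) = ∫ x, (ψ x) • (𝓕 g x) := by
      have := VectorFourier.integral_fourierIntegral_smul_eq_flip (F := ℂ)
        (e := Real.fourierChar) (μ := (volume : Measure (EuclideanSpace ℝ (Fin n)))) (ν := (volume : Measure (EuclideanSpace ℝ (Fin n))))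
        (L := innerₗ (EuclideanSpace ℝ (Fin n))) (f := (ψ : EuclideanSpace ℝ (Fin n) → ℂ)) (g := g)
        Real.continuous_fourierChar continuous_inner ψ.integrable hg_int
      rw [flip_eq] at this
      exact this
    have : ∫ x, φ x • g x = ∫ ξ, (𝓕 (ψ : EuclideanSpace ℝ (Fin n) → ℂ) ξ) • (g ξ) := by
      rw [hψΦ]
      congr 1
    rw [this, mult]
    simp [hFg]
  -- Step 4: conclude.
  have := ae_restrict_of_ae (μ := (volume : Measure (EuclideanSpace ℝ (Fin n)))) (s := Ω) hg_zero
  filter_upwards [this, ae_restrict_mem hΩ_meas] with x hx hxΩ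
  simpa [hg_def, Set.indicator_of_mem hxΩ] using hx
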